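/- arXiv:1903.09874 — 7 statements merged into one kernel-verified Lean document; each statement's English description precedes it below -/
import Mathlib

section
/- Let y be a permutation of [n] containing an occurrence y_i y_j y_k y_l y_m of the (classical) pattern 3-5-1-4-2 (positions i<j<k<l<m, values satisfying y_k < y_m < y_i < y_l < y_j). If every entry y_p of y with y_m < y_p < y_l occurs before position j in y, then y contains an occurrence of the vincular pattern 3-51-4-2 (i.e., there exist positions a < b, b+1 < c < d with y_{b+1} < y_d < y_a < y_c < y_b). -/
/-- If a permutation `y` of `[n]` contains an occurrence of the classical pattern
3-5-1-4-2 such that every value strictly between the '1' and the '4' occurs before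
the position of the '5', then `y` contains an occurrence of the vincular pattern
3-51-4-2. -/
theorem stmt_0 (n : ℕ) (y : Equiv.Perm (Fin n))
    (i j k l m : Fin n)
    (hij : i < j) (hjk : j < k) (hkl : k < l) (hlm : l < m)
    (h1 : y k < y m) (h2 : y m < y i) (h3 : y i < y l) (h4 : y l < y j)
    (hbetween : ∀ p : Fin n, y m < y p → y p < y l → p < j) :
    ∃ a b b' c d : Fin n, a < b ∧ (b' : ℕ) = (b : ℕ) + 1 ∧ b' < c ∧ c < d ∧
      y b' < y d ∧ y d < y a ∧ y a < y c ∧ y c < y b := by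
  classical
  set S : Finset (Fin n) := Finset.univ.filter (fun q => j ≤ q ∧ q < k ∧ y l < y q) with hS
  have hjS : j ∈ S := by
    simp only [hS, Finset.mem_filter, Finset.mem_univ, true_and]
    exact ⟨le_refl j, hjk, h4⟩
  have hne : S.Nonempty := ⟨j, hjS⟩
  set b := S.max' hne with hb
  have hbS : b ∈ S := S.max'_mem hne
  simp only [hS, Finset.mem_filter, Finset.mem_univ, true_and] at hbS
  obtain ⟨hjb, hbk, hlb⟩ := hbS
  have hb1 : b.val + 1 < n := lt_of_le_of_lt (Nat.succ_le_of_lt hbk) k.isLt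
  set b' : Fin n := ⟨b.val + 1, hb1⟩ with hb'
  have hbb' : b < b' := by
    simp [Fin.lt_def, hb']
  have hb'k : b' ≤ k := by
    simp only [Fin.le_def, hb']
    exact Nat.succ_le_of_lt hbk
  have hyb' : y b' < y m := by
    rcases eq_or_lt_of_le hb'k with heq | hlt
    · rw [heq]; exact h1
    · -- b' < k, so by maximality y b' ≤ y l
      have hnotS : y b' ≤ y l := by
        by_contra hcon
        push_neg at hcon
        have : b' ∈ S := by
          simp only [hS, Finset.mem_filter, Finset.mem_univ, true_and]
          exact ⟨le_of_lt (lt_of_le_of_lt hjb hbb'), hlt, hcon⟩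
        have := S.le_max' b' this
        exact absurd (lt_of_lt_of_le hbb' this) (lt_irrefl b)
      have hne' : y b' ≠ y l := by
        intro h
        have : b' = l := y.injective h
        exact absurd (this ▸ lt_trans hlt hkl) (lt_irrefl _)
      have hyl : y b' < y l := lt_of_le_of_ne hnotS hne'
      by_contra hcon
      push_neg at hcon
      have hnem : y m ≠ y b' := by
        intro h
        have : m = b' := y.injective h
        have : b' < m := lt_trans hlt (lt_trans hkl hlm)
        omega
      have := hbetween b' (lt_of_le_of_ne hcon hnem) hyl
      have : j ≤ b' := le_of_lt (lt_of_le_of_lt hjb hbb')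
      omega
  refine ⟨i, b, b', l, m, lt_of_lt_of_le hij hjb, rfl, ?_, hlm, hyb', h2, h3, hlb⟩
  exact lt_of_le_of_lt hb'k hkl
end

section
/- A permutation y of [n] avoids both vincular patterns 2-31 and 31-2 if and only if every descent y_i > y_{i+1} of y satisfies y_i - y_{i+1} = 1. -/
/-- A permutation avoids both vincular patterns 2-31 and 31-2 if and only if every
descent `yᵢ > yᵢ₊₁` satisfies `yᵢ = yᵢ₊₁ + 1`. -/
theorem stmt_6 (n : ℕ) (y : Equiv.Perm (Fin n)) :
    ((¬∃ a b b' : Fin n, a < b ∧ (b' : ℕ) = (b : ℕ) + 1 ∧ y b' < y a ∧ y a < y b) ∧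
     (¬∃ a a' c : Fin n, (a' : ℕ) = (a : ℕ) + 1 ∧ a' < c ∧ y a' < y c ∧ y c < y a)) ↔
    (∀ i i' : Fin n, (i' : ℕ) = (i : ℕ) + 1 → y i' < y i →
      (y i : ℕ) = (y i' : ℕ) + 1) := by
  constructor
  · rintro ⟨h1, h2⟩ i i' hi hdesc
    by_contra h
    have hlt : (y i' : ℕ) + 1 < (y i : ℕ) :=
      lt_of_le_of_ne (Nat.succ_le_of_lt hdesc) (fun e => h e.symm)
    have hv : (y i' : ℕ) + 1 < n := lt_trans hlt (y i).isLt
    set v : Fin n := ⟨(y i' : ℕ) + 1, hv⟩ with hvdef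
    set c : Fin n := y.symm v with hcdef
    have hyc : y c = v := y.apply_symm_apply v
    have hvi' : y i' < y c := by
      rw [hyc]; exact Fin.mk_lt_mk.mpr (Nat.lt_succ_self _) |>.trans_le (le_refl _)
    have hvi : y c < y i := by
      rw [hyc]; exact Fin.mk_lt_mk.mpr hlt
    have hci : c ≠ i := fun e => absurd (congrArg y e) (Fin.ne_of_lt hvi)
    have hci' : c ≠ i' := by
      intro e
      have : y c = y i' := congrArg y e
      exact absurd this.symm (Fin.ne_of_lt hvi')
    rcases lt_trichotomy c i with hlt' | heq | hgt
    · exact h1 ⟨c, i, i', hlt', hi, hvi', hvi⟩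
    · exact hci heq
    · have : i' < c := by
        have : (i : ℕ) + 1 ≤ (c : ℕ) := hgt
        rcases lt_or_eq_of_le this with h' | h'
        · exact Fin.lt_def.mpr (hi ▸ h')
        · exact absurd (Fin.ext (h'.symm.trans hi.symm)) hci'
      exact h2 ⟨i, i', c, hi, this, hvi', hvi⟩
  · intro h
    constructor
    · rintro ⟨a, b, b', hab, hb, h1, h2⟩
      have := h b b' hb (h1.trans h2)
      omega
    · rintro ⟨a, a', c, ha, hac, h1, h2⟩
      have := h a a' ha (h1.trans h2)
      omega
end

section
/- The number of permutations of [n] avoiding both vincular patterns 2-31 and 31-2 equals 2^{n-1} (for n ≥ 1), i.e., these 0-clumped permutations are in bijection with compositions of n. -/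
open List

/-- Lists that are permutations of `range n` where every descent drops by exactly 1. -/
def GoodL (n : ℕ) (l : List ℕ) : Prop :=
  l ~ List.range n ∧ l.Chain' (fun a b => a ≤ b + 1)

abbrev TT (n : ℕ) := {l : List ℕ // GoodL n l}

lemma GoodL.lt {n : ℕ} {l : List ℕ} (h : GoodL n l) {x : ℕ} (hx : x ∈ l) : x < n := by
  have := h.1.mem_iff.mp hx
  simpa using this

lemma GoodL.nodup {n : ℕ} {l : List ℕ} (h : GoodL n l) : l.Nodup :=
  h.1.symm.nodup List.nodup_range

/-- structure: in a good list of `range (n+2)`, the max `n+1` is last or right before `n`. -/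
lemma decompTT {n : ℕ} {l : List ℕ} (h : GoodL (n+2) l) :
    ∃ t d, l = t ++ (n+1) :: d ∧ (n+1) ∉ t ∧ (d = [] ∨ ∃ d', d = n :: d') := by
  have hmem : (n+1) ∈ l := h.1.mem_iff.mpr (by simp)
  obtain ⟨t, d, rfl⟩ := List.append_of_mem hmem
  have hnd := h.nodup
  have hnt : (n+1) ∉ t := by
    intro hmt
    exact (List.disjoint_of_nodup_append hnd hmt) List.mem_cons_self
  refine ⟨t, d, rfl, hnt, ?_⟩
  rcases d with _ | ⟨x, d'⟩
  · exact Or.inl rfl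
  · right
    have hc := (List.isChain_append.mp h.2).2.1
    have hx1 : n + 1 ≤ x + 1 := (List.isChain_cons_cons.mp hc).1
    have hxl : x < n + 2 := h.lt (by simp)
    have hxne : x ≠ n + 1 := by
      have := (List.nodup_append.mp hnd).2.1
      simp at this
      intro he; exact this.1.1 he.symm
    have : x = n := by omega
    exact ⟨d', by rw [this]⟩

lemma perm_step {n : ℕ} : List.range (n+2) ~ (n+1) :: List.range (n+1) := by
  rw [List.range_succ]
  exact List.perm_append_singleton _ _

/-- backward map -/
def gmap (n : ℕ) : Bool × TT (n+1) → TT (n+2) := fun p =>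
  if p.1 then
    ⟨p.2.1 ++ [n+1], by
      obtain ⟨l, hl⟩ := p.2
      constructor
      · exact ((List.perm_append_singleton _ _).trans (hl.1.cons _)).trans perm_step.symm
      · refine List.isChain_append.mpr ⟨hl.2, List.isChain_singleton _, ?_⟩
        intro x hx y hy
        simp at hy
        subst hy
        have : x ∈ l := List.mem_of_mem_getLast? hx  -- check name
        have := hl.lt this
        omega⟩
  else
    ⟨p.2.1.takeWhile (fun x => x ≠ n) ++ (n+1) :: p.2.1.dropWhile (fun x => x ≠ n), by
      obtain ⟨l, hl⟩ := p.2
      have hmem : n ∈ l := hl.1.mem_iff.mpr (by simp)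
      have hdw : l.dropWhile (fun x => x ≠ n) ≠ [] := by
        intro he
        have := List.dropWhile_eq_nil_iff.mp he n hmem
        simp at this
      have hsplit := List.takeWhile_append_dropWhile (p := fun x => decide (x ≠ n)) (l := l)
      have hhead : (l.dropWhile (fun x => x ≠ n)).head hdw = n := by
        have := List.head_dropWhile_not (fun x => decide (x ≠ n)) hdw
        simpa using this
      constructor
      · refine (List.perm_middle.trans ?_).trans perm_step.symm
        rw [hsplit]
        exact hl.1.cons _
      · have hc : (l.takeWhile (fun x => x ≠ n)).Chain' (fun a b => a ≤ b + 1) ∧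
            (l.dropWhile (fun x => x ≠ n)).Chain' (fun a b => a ≤ b + 1) := by
          have := hl.2
          rw [← hsplit] at this
          exact ⟨(List.isChain_append.mp this).1, (List.isChain_append.mp this).2.1⟩
        refine List.isChain_append.mpr ⟨hc.1, ?_, ?_⟩
        · rw [List.isChain_cons]  -- Chain' (a :: l) ↔ (∀ y ∈ head?, R a y) ∧ chain' l
          refine ⟨?_, hc.2⟩
          intro y hy
          rw [List.head?_eq_head hdw, Option.mem_some_iff] at hy
          subst hy
          rw [hhead]
        · intro x hx y hy
          simp at hy
          subst hy
          have : x ∈ l := by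
            have : x ∈ l.takeWhile (fun x => x ≠ n) := List.mem_of_mem_getLast? hx
            exact (List.takeWhile_prefix _).subset this
          have := hl.lt this
          omega⟩

lemma erase_of_split {t d : List ℕ} {a : ℕ} (h : a ∉ t) : (t ++ a :: d).erase a = t ++ d := by
  rw [List.erase_append_right _ h, List.erase_cons_head]

lemma takeWhile_split {t d : List ℕ} {a : ℕ} (h : a ∉ t) :
    (t ++ a :: d).takeWhile (fun x => x ≠ a) = t ∧
      (t ++ a :: d).dropWhile (fun x => x ≠ a) = a :: d := by
  induction t with
  | nil => simp
  | cons x t ih =>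
    simp only [List.mem_cons, not_or] at h
    have := ih h.2
    have hxa : x ≠ a := fun he => h.1 he.symm
    simp only [ne_eq, decide_not] at this ⊢
    simp [List.takeWhile_cons, List.dropWhile_cons, hxa, this.1, this.2]

lemma getLast?_split {t : List ℕ} {a b : ℕ} (d : List ℕ) :
    (t ++ a :: b :: d).getLast? = (b :: d).getLast? := by
  rw [List.getLast?_append, List.getLast?_cons_cons]
  cases hb : (b :: d).getLast? with
  | none => simp [List.getLast?_eq_getLast (List.cons_ne_nil b d)] at hb
  | some x => rfl

/-- forward map -/
def fmap (n : ℕ) : TT (n+2) → Bool × TT (n+1) := fun q =>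
  (q.1.getLast? == some (n+1),
   ⟨q.1.erase (n+1), by
      obtain ⟨l, hl⟩ := q
      constructor
      · refine (hl.1.erase (n+1)).trans ?_
        rw [List.range_succ, List.erase_append_right _ (by simp), List.erase_cons_head,
          List.append_nil]
      · obtain ⟨t, d, rfl, hnt, hd⟩ := decompTT hl
        rw [erase_of_split hnt]
        have hc := List.isChain_append.mp hl.2
        refine List.isChain_append.mpr ⟨hc.1, (List.isChain_cons.mp hc.2.1).2, ?_⟩
        intro x hx y hy
        have hxl : x < n + 2 := hl.lt (by
          have := List.mem_of_mem_getLast? hx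
          simp [this])
        rcases hd with rfl | ⟨d', rfl⟩
        · simp at hy
        · simp at hy
          omega⟩)

lemma fg (n : ℕ) (p : Bool × TT (n+1)) : fmap n (gmap n p) = p := by
  obtain ⟨b, l, hl⟩ := p
  have hln : (n+1) ∉ l := fun hm => by have := hl.lt hm; omega
  cases b
  · -- false case
    have hmem : n ∈ l := hl.1.mem_iff.mpr (by simp)
    obtain ⟨t, d, hsplit, hnt⟩ : ∃ t d, l = t ++ n :: d ∧ n ∉ t := by
      obtain ⟨t, d, rfl⟩ := List.append_of_mem hmem
      exact ⟨t, d, rfl, fun hm =>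
        (List.disjoint_of_nodup_append hl.nodup hm) List.mem_cons_self⟩
    have htw := takeWhile_split (t := t) (d := d) hnt
    have hgm : (gmap n (false, ⟨l, hl⟩)).1 = t ++ (n+1) :: n :: d := by
      show l.takeWhile _ ++ (n+1) :: l.dropWhile _ = _
      rw [hsplit, htw.1, htw.2]
    have hnt' : (n+1) ∉ t := fun hm => by
      have := hl.lt (hsplit ▸ List.mem_append_left _ hm); omega
    refine Prod.ext ?_ (Subtype.ext ?_)
    · show ((gmap n (false, ⟨l, hl⟩)).1.getLast? == some (n+1)) = false
      rw [hgm, getLast?_split d, List.getLast?_eq_getLast (List.cons_ne_nil n d)]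
      have : (n :: d).getLast (List.cons_ne_nil n d) ∈ l := by
        rw [hsplit]
        exact List.mem_append_right _ (List.getLast_mem _)
      have := hl.lt this
      simp; omega
    · show (gmap n (false, ⟨l, hl⟩)).1.erase (n+1) = l
      rw [hgm, erase_of_split hnt', hsplit]
  · -- true case
    refine Prod.ext ?_ (Subtype.ext ?_)
    · show ((l ++ [n+1]).getLast? == some (n+1)) = true
      rw [List.getLast?_concat]; simp
    · show (l ++ [n+1]).erase (n+1) = l
      rw [List.erase_append_right _ hln, List.erase_cons_head, List.append_nil]

lemma g_surj (n : ℕ) : Function.Surjective (gmap n) := by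
  rintro ⟨l, hl⟩
  obtain ⟨t, d, rfl, hnt, hd⟩ := decompTT hl
  have hc := List.isChain_append.mp hl.2
  rcases hd with rfl | ⟨d', rfl⟩
  · refine ⟨(true, ⟨t, ?_, hc.1⟩), Subtype.ext rfl⟩
    have : (n+1) :: t ~ (n+1) :: List.range (n+1) :=
      ((List.perm_append_singleton _ _).symm.trans hl.1).trans perm_step
    exact (List.perm_cons _).mp this
  · have hmt : n ∉ t := fun hm =>
      (List.disjoint_of_nodup_append hl.nodup hm) (by simp)
    have hgood : GoodL (n+1) (t ++ n :: d') := by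
      constructor
      · have : (n+1) :: (t ++ n :: d') ~ (n+1) :: List.range (n+1) :=
          (List.perm_middle.symm.trans hl.1).trans perm_step
        exact (List.perm_cons _).mp this
      · refine List.isChain_append.mpr ⟨hc.1, (List.isChain_cons.mp hc.2.1).2, ?_⟩
        intro x hx y hy
        have hxl : x < n + 2 := hl.lt (by
          have := List.mem_of_mem_getLast? hx
          simp [this])
        simp at hy
        omega
    refine ⟨(false, ⟨t ++ n :: d', hgood⟩), Subtype.ext ?_⟩
    have htw := takeWhile_split (t := t) (d := d') hmt
    show (t ++ n :: d').takeWhile _ ++ (n+1) :: (t ++ n :: d').dropWhile _ = _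
    rw [htw.1, htw.2]

lemma card_TT_step (n : ℕ) : Nat.card (TT (n+2)) = 2 * Nat.card (TT (n+1)) := by
  have hb : Function.Bijective (gmap n) :=
    ⟨Function.LeftInverse.injective (fg n), g_surj n⟩
  rw [← Nat.card_eq_of_bijective (gmap n) hb, Nat.card_prod, Nat.card_eq_fintype_card (α := Bool)]
  rfl

lemma card_TT_one : Nat.card (TT 1) = 1 := by
  rw [Nat.card_eq_one_iff_unique]
  constructor
  · constructor
    intro ⟨l, hl⟩ ⟨l', hl'⟩
    have h1 : l = [0] := List.perm_singleton.mp (by simpa [List.range_succ] using hl.1)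
    have h2 : l' = [0] := List.perm_singleton.mp (by simpa [List.range_succ] using hl'.1)
    exact Subtype.ext (h1.trans h2.symm)
  · exact ⟨⟨[0], by simp [GoodL, List.range_succ], List.isChain_singleton _⟩⟩

lemma card_TT (n : ℕ) (hn : 1 ≤ n) : Nat.card (TT n) = 2 ^ (n - 1) := by
  induction n, hn using Nat.le_induction with
  | base => simpa using card_TT_one
  | succ n hn ih =>
    obtain ⟨m, rfl⟩ := Nat.exists_eq_add_of_le hn
    have h1 : 1 + m = m + 1 := by omega
    rw [h1] at ih ⊢
    rw [show m + 1 + 1 = m + 2 from rfl, card_TT_step m, ih]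
    rw [show m + 1 - 1 = m from rfl, show m + 2 - 1 = m + 1 from rfl, pow_succ]
    ring

/-- The avoidance predicate from the theorem statement. -/
def PermP (n : ℕ) (y : Equiv.Perm (Fin n)) : Prop :=
  (¬∃ a b b' : Fin n, a < b ∧ (b' : ℕ) = (b : ℕ) + 1 ∧ y b' < y a ∧ y a < y b) ∧
  (¬∃ a a' c : Fin n, (a' : ℕ) = (a : ℕ) + 1 ∧ a' < c ∧ y a' < y c ∧ y c < y a)

lemma permP_iff {n : ℕ} (y : Equiv.Perm (Fin n)) :
    PermP n y ↔ ∀ (i : ℕ) (h : i + 1 < n),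
      (y ⟨i, Nat.lt_of_succ_lt h⟩ : ℕ) ≤ (y ⟨i + 1, h⟩ : ℕ) + 1 := by
  constructor
  · intro hP i h
    by_contra hc
    push_neg at hc
    have hv : ((y ⟨i + 1, h⟩ : ℕ) + 1) < n := lt_trans hc (y ⟨i, Nat.lt_of_succ_lt h⟩).isLt
    obtain ⟨m, hym⟩ : ∃ m : Fin n, (y m : ℕ) = (y ⟨i + 1, h⟩ : ℕ) + 1 :=
      ⟨y.symm ⟨_, hv⟩, by simp⟩
    have hmb : (m : ℕ) ≠ i := by
      intro he
      have hme : m = ⟨i, Nat.lt_of_succ_lt h⟩ := Fin.ext he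
      rw [hme] at hym; omega
    have hmb' : (m : ℕ) ≠ i + 1 := by
      intro he
      have hme : m = ⟨i + 1, h⟩ := Fin.ext he
      rw [hme] at hym; omega
    rcases Nat.lt_or_ge (m : ℕ) i with hlt | hge
    · exact hP.1 ⟨m, ⟨i, Nat.lt_of_succ_lt h⟩, ⟨i + 1, h⟩, Fin.lt_def.mpr hlt, rfl,
        Fin.lt_def.mpr (by omega), Fin.lt_def.mpr (by omega)⟩
    · have hgt : i + 1 < (m : ℕ) := by omega
      exact hP.2 ⟨⟨i, Nat.lt_of_succ_lt h⟩, ⟨i + 1, h⟩, m, rfl, Fin.lt_def.mpr hgt,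
        Fin.lt_def.mpr (by omega), Fin.lt_def.mpr (by omega)⟩
  · intro H
    constructor
    · rintro ⟨a, b, b', hab, hb', h1, h2⟩
      have hlt : (b : ℕ) + 1 < n := hb' ▸ b'.isLt
      have := H b hlt
      have e1 : (⟨(b : ℕ), Nat.lt_of_succ_lt hlt⟩ : Fin n) = b := Fin.ext rfl
      have e2 : (⟨(b : ℕ) + 1, hlt⟩ : Fin n) = b' := Fin.ext hb'.symm
      rw [e1, e2] at this
      rw [Fin.lt_iff_val_lt_val] at h1 h2
      omega
    · rintro ⟨a, a', c, ha', hac, h1, h2⟩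
      have hlt : (a : ℕ) + 1 < n := ha' ▸ a'.isLt
      have := H a hlt
      have e1 : (⟨(a : ℕ), Nat.lt_of_succ_lt hlt⟩ : Fin n) = a := Fin.ext rfl
      have e2 : (⟨(a : ℕ) + 1, hlt⟩ : Fin n) = a' := Fin.ext ha'.symm
      rw [e1, e2] at this
      rw [Fin.lt_iff_val_lt_val] at h1 h2
      omega

def Fmap (n : ℕ) : {y : Equiv.Perm (Fin n) // PermP n y} → TT n := fun q =>
  ⟨List.ofFn (fun i => (q.1 i : ℕ)), by
    obtain ⟨y, hy⟩ := q
    have hinj : Function.Injective (fun i : Fin n => (y i : ℕ)) :=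
      fun i j hij => y.injective (Fin.ext hij)
    constructor
    · refine List.perm_of_nodup_nodup_toFinset_eq
        (List.nodup_ofFn.mpr hinj) List.nodup_range ?_
      ext x
      simp only [List.mem_toFinset, List.mem_ofFn, List.mem_range, Set.mem_range]
      constructor
      · rintro ⟨i, rfl⟩; exact (y i).isLt
      · intro hx; exact ⟨y.symm ⟨x, hx⟩, by simp⟩
    · exact List.isChain_ofFn.mpr ((permP_iff y).mp hy)⟩

lemma Fmap_bijective (n : ℕ) : Function.Bijective (Fmap n) := by
  constructor
  · rintro ⟨y, hy⟩ ⟨y', hy'⟩ h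
    have h0 := congrArg Subtype.val h
    simp only [Fmap] at h0
    have := List.ofFn_injective h0
    refine Subtype.ext (Equiv.ext fun i => Fin.ext ?_)
    exact congrFun this i
  · rintro ⟨l, hperm, hchain⟩
    have hlen : l.length = n := hperm.length_eq.trans List.length_range
    have hnd : l.Nodup := hperm.symm.nodup List.nodup_range
    set f : Fin n → Fin n := fun i =>
      ⟨l.get (Fin.cast hlen.symm i), by
        have : l.get (Fin.cast hlen.symm i) ∈ l := l.get_mem _
        have := hperm.mem_iff.mp this
        simpa using this⟩ with hf
    have hfinj : Function.Injective f := by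
      intro i j hij
      have h1 : l.get (Fin.cast hlen.symm i) = l.get (Fin.cast hlen.symm j) :=
        congrArg Fin.val hij
      have h2 := List.nodup_iff_injective_get.mp hnd h1
      have h3 : (i : ℕ) = (j : ℕ) := by
        have := congrArg Fin.val h2
        simpa using this
      exact Fin.ext h3
    set y : Equiv.Perm (Fin n) := Equiv.ofBijective f (Finite.injective_iff_bijective.mp hfinj)
    have hyf : ∀ i, y i = f i := fun i => Equiv.ofBijective_apply _ _ i
    have hofn : List.ofFn (fun i => (y i : ℕ)) = l := by
      refine List.ext_get (by simp [hlen]) ?_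
      intro k h1 h2
      rw [List.get_ofFn]
      simp only [hyf]
      rfl
    have hP : PermP n y := by
      rw [permP_iff]
      intro i h
      have := List.isChain_iff_getElem.mp hchain i (by omega)
      simp only [hyf]
      exact this
    exact ⟨⟨y, hP⟩, Subtype.ext hofn⟩

/-- The number of permutations of `[n]` (for `n ≥ 1`) avoiding both vincular patterns
2-31 and 31-2 equals `2 ^ (n - 1)`, the number of compositions of `n`. -/
theorem stmt_7 (n : ℕ) (hn : 1 ≤ n) :
    Nat.card {y : Equiv.Perm (Fin n) //
      (¬∃ a b b' : Fin n, a < b ∧ (b' : ℕ) = (b : ℕ) + 1 ∧ y b' < y a ∧ y a < y b) ∧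
      (¬∃ a a' c : Fin n, (a' : ℕ) = (a : ℕ) + 1 ∧ a' < c ∧ y a' < y c ∧ y c < y a)} =
    2 ^ (n - 1) := by
  show Nat.card {y : Equiv.Perm (Fin n) // PermP n y} = 2 ^ (n - 1)
  rw [Nat.card_eq_of_bijective (Fmap n) (Fmap_bijective n)]
  exact card_TT n hn
end

section
/- Let x ∈ S_p and y ∈ S_q with n = p + q. Define xy' ∈ S_n as the concatenation of x with the sequence (y_1 + p)...(y_q + p), and y'x ∈ S_n as the concatenation of (y_1 + p)...(y_q + p) with x. Then xy' ≤ y'x in the right weak order on S_n, and a permutation z ∈ S_n lies in the interval [xy', y'x] if and only if z is a shuffle of the sequences x_1...x_p and (y_1+p)...(y_q+p) (i.e., the restriction of z to values in [p] equals x and the restriction of z to values in [p+1, n], shifted down by p, equals y). -/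
/-- The inversion set of a permutation: pairs of values `(a, b)` with `a < b` such that
`b` precedes `a` in the one-line notation. -/
def invSet {n : ℕ} (x : Equiv.Perm (Fin n)) : Set (Fin n × Fin n) :=
  {p | p.1 < p.2 ∧ x.symm p.2 < x.symm p.1}

/-- The concatenation `xy'` of `x ∈ S_p` with the shifted permutation
`y' = (y₁+p)⋯(y_q+p)`: positions `0,…,p-1` hold `x`, positions `p,…,p+q-1`
hold the entries of `y` shifted up by `p`. -/
def hconcat {p q : ℕ} (x : Equiv.Perm (Fin p)) (y : Equiv.Perm (Fin q)) :
    Equiv.Perm (Fin (p + q)) :=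
  finSumFinEquiv.symm.trans ((x.sumCongr y).trans finSumFinEquiv)

/-- The concatenation `y'x`: positions `0,…,q-1` hold the entries of `y` shifted up
by `p`, positions `q,…,q+p-1` hold `x`. -/
def vconcat {p q : ℕ} (x : Equiv.Perm (Fin p)) (y : Equiv.Perm (Fin q)) :
    Equiv.Perm (Fin (p + q)) :=
  ((finCongr (Nat.add_comm p q)).trans finSumFinEquiv.symm).trans
    (((y.sumCongr x).trans (Equiv.sumComm (Fin q) (Fin p))).trans finSumFinEquiv)

section helpers
variable {p q : ℕ} (x : Equiv.Perm (Fin p)) (y : Equiv.Perm (Fin q))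

lemma hc_left (a : Fin p) : (hconcat x y).symm (Fin.castAdd q a) = Fin.castAdd q (x.symm a) := by
  simp [hconcat]

lemma hc_right (b : Fin q) : (hconcat x y).symm (Fin.natAdd p b) = Fin.natAdd p (y.symm b) := by
  simp [hconcat]

lemma vc_left (a : Fin p) : ((vconcat x y).symm (Fin.castAdd q a)).val = q + (x.symm a).val := by
  simp [vconcat]; omega

lemma vc_right (b : Fin q) : ((vconcat x y).symm (Fin.natAdd p b)).val = (y.symm b).val := by
  simp [vconcat]

lemma ca_lt_ca {a b : Fin p} (h : a < b) : Fin.castAdd q a < Fin.castAdd q b := by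
  rw [Fin.lt_def] at h ⊢; simpa using h

lemma ca_lt_ca' {a b : Fin p} (h : Fin.castAdd q a < Fin.castAdd q b) : a < b := by
  rw [Fin.lt_def] at h ⊢; simpa using h

lemma na_lt_na {a b : Fin q} (h : a < b) : Fin.natAdd p a < Fin.natAdd p b := by
  rw [Fin.lt_def] at h ⊢; simpa using h

lemma na_lt_na' {a b : Fin q} (h : Fin.natAdd p a < Fin.natAdd p b) : a < b := by
  rw [Fin.lt_def] at h ⊢; simpa using h

lemma not_na_lt_ca (a : Fin p) (b : Fin q) : ¬ Fin.natAdd p b < Fin.castAdd q a := by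
  intro h; rw [Fin.lt_def] at h; simp at h; omega

end helpers

/-- `xy' ≤ y'x` in the right weak order on `S_{p+q}`, and `z ∈ [xy', y'x]` iff `z` is a
shuffle of `x` and the shifted `y`: the restriction of `z` to values in `[p]` is `x` and
the restriction of `z` to values in `[p+1, p+q]`, shifted down by `p`, is `y` (expressed
via relative order of positions of the corresponding values). -/
theorem stmt_13 (p q : ℕ) (x : Equiv.Perm (Fin p)) (y : Equiv.Perm (Fin q)) :
    invSet (hconcat x y) ⊆ invSet (vconcat x y) ∧
    ∀ z : Equiv.Perm (Fin (p + q)),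
      (invSet (hconcat x y) ⊆ invSet z ∧ invSet z ⊆ invSet (vconcat x y)) ↔
      ((∀ a b : Fin p, z.symm (Fin.castAdd q a) < z.symm (Fin.castAdd q b) ↔
          x.symm a < x.symm b) ∧
       (∀ a b : Fin q, z.symm (Fin.natAdd p a) < z.symm (Fin.natAdd p b) ↔
          y.symm a < y.symm b)) := by
  have key : ∀ z : Equiv.Perm (Fin (p + q)),
      ((∀ a b : Fin p, z.symm (Fin.castAdd q a) < z.symm (Fin.castAdd q b) ↔
          x.symm a < x.symm b) ∧
       (∀ a b : Fin q, z.symm (Fin.natAdd p a) < z.symm (Fin.natAdd p b) ↔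
          y.symm a < y.symm b)) →
      (invSet (hconcat x y) ⊆ invSet z ∧ invSet z ⊆ invSet (vconcat x y)) := by
    rintro z ⟨hx, hy⟩
    constructor
    · rintro ⟨u, v⟩ ⟨huv, hin⟩
      obtain ⟨su, rfl⟩ := finSumFinEquiv.surjective u
      obtain ⟨sv, rfl⟩ := finSumFinEquiv.surjective v
      rcases su with a | a <;> rcases sv with b | b <;>
        simp only [finSumFinEquiv_apply_left, finSumFinEquiv_apply_right,
          hc_left, hc_right] at huv hin
      · exact ⟨huv, (hx b a).2 (ca_lt_ca' hin)⟩
      · exact absurd hin (not_na_lt_ca _ _)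
      · exact absurd huv (not_na_lt_ca _ _)
      · exact ⟨huv, (hy b a).2 (na_lt_na' hin)⟩
    · rintro ⟨u, v⟩ ⟨huv, hin⟩
      obtain ⟨su, rfl⟩ := finSumFinEquiv.surjective u
      obtain ⟨sv, rfl⟩ := finSumFinEquiv.surjective v
      rcases su with a | a <;> rcases sv with b | b <;>
        simp only [finSumFinEquiv_apply_left, finSumFinEquiv_apply_right] at huv hin ⊢
      · refine ⟨huv, ?_⟩
        have h1 : x.symm b < x.symm a := (hx b a).1 hin
        rw [Fin.lt_def, vc_left, vc_left]
        rw [Fin.lt_def] at h1; omega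
      · refine ⟨huv, ?_⟩
        rw [Fin.lt_def, vc_left, vc_right]
        have := (y.symm b).isLt
        omega
      · exact absurd huv (not_na_lt_ca _ _)
      · refine ⟨huv, ?_⟩
        have h1 : y.symm b < y.symm a := (hy b a).1 hin
        rw [Fin.lt_def, vc_right, vc_right]
        rw [Fin.lt_def] at h1; omega
  refine ⟨(key (vconcat x y) ⟨?_, ?_⟩).1, ?_⟩
  · intro a b
    rw [Fin.lt_def, Fin.lt_def (a := x.symm a), vc_left, vc_left]; omega
  · intro a b
    rw [Fin.lt_def, Fin.lt_def (a := y.symm a), vc_right, vc_right]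
  · intro z
    refine ⟨fun ⟨h1, h2⟩ => ?_, key z⟩
    have hmx : ∀ a b : Fin p, x.symm a < x.symm b →
        z.symm (Fin.castAdd q a) < z.symm (Fin.castAdd q b) := by
      intro a b hab
      rcases lt_trichotomy a b with h | h | h
      · by_contra hc
        push_neg at hc
        have hne : z.symm (Fin.castAdd q b) ≠ z.symm (Fin.castAdd q a) := by
          intro he
          have hba : (Fin.castAdd q b : Fin (p + q)) = Fin.castAdd q a := z.symm.injective he
          have : b = a := by
            have := congrArg Fin.val hba
            simpa [Fin.ext_iff] using this
          exact absurd this h.ne'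
        have hmem : (⟨Fin.castAdd q a, Fin.castAdd q b⟩ : Fin (p+q) × Fin (p+q)) ∈ invSet z :=
          ⟨ca_lt_ca h, lt_of_le_of_ne hc hne⟩
        have h3 := (h2 hmem).2
        rw [Fin.lt_def, vc_left, vc_left] at h3
        rw [Fin.lt_def] at hab; omega
      · exact absurd hab (by rw [h]; exact lt_irrefl _)
      · have hmem : (⟨Fin.castAdd q b, Fin.castAdd q a⟩ : Fin (p+q) × Fin (p+q)) ∈
            invSet (hconcat x y) := by
          refine ⟨ca_lt_ca h, ?_⟩
          rw [hc_left, hc_left]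
          exact ca_lt_ca hab
        exact (h1 hmem).2
    have hmy : ∀ a b : Fin q, y.symm a < y.symm b →
        z.symm (Fin.natAdd p a) < z.symm (Fin.natAdd p b) := by
      intro a b hab
      rcases lt_trichotomy a b with h | h | h
      · by_contra hc
        push_neg at hc
        have hne : z.symm (Fin.natAdd p b) ≠ z.symm (Fin.natAdd p a) := by
          intro he
          have hba : (Fin.natAdd p b : Fin (p + q)) = Fin.natAdd p a := z.symm.injective he
          have : b = a := by
            have := congrArg Fin.val hba
            simpa [Fin.ext_iff] using this
          exact absurd this h.ne'
        have hmem : (⟨Fin.natAdd p a, Fin.natAdd p b⟩ : Fin (p+q) × Fin (p+q)) ∈ invSet z :=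
          ⟨na_lt_na h, lt_of_le_of_ne hc hne⟩
        have h3 := (h2 hmem).2
        rw [Fin.lt_def, vc_right, vc_right] at h3
        rw [Fin.lt_def] at hab; omega
      · exact absurd hab (by rw [h]; exact lt_irrefl _)
      · have hmem : (⟨Fin.natAdd p b, Fin.natAdd p a⟩ : Fin (p+q) × Fin (p+q)) ∈
            invSet (hconcat x y) := by
          refine ⟨na_lt_na h, ?_⟩
          rw [hc_right, hc_right]
          exact na_lt_na hab
        exact (h1 hmem).2
    constructor
    · intro a b
      refine ⟨fun hz => ?_, hmx a b⟩
      rcases lt_trichotomy (x.symm a) (x.symm b) with h | h | h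
      · exact h
      · have : a = b := x.symm.injective h
        subst this; exact absurd hz (lt_irrefl _)
      · exact absurd hz (asymm (hmx b a h))
    · intro a b
      refine ⟨fun hz => ?_, hmy a b⟩
      rcases lt_trichotomy (y.symm a) (y.symm b) with h | h | h
      · exact h
      · have : a = b := y.symm.injective h
        subst this; exact absurd hz (lt_irrefl _)
      · exact absurd hz (asymm (hmy b a h))
end

section
/- If x ∈ S_p avoids all four vincular patterns 2-4-51-3, 4-2-51-3, 3-51-2-4, 3-51-4-2, and y ∈ S_q also avoids these patterns, then the concatenation y'x ∈ S_{p+q} (where y' = (y_1+p)...(y_q+p)) also avoids all four patterns. -/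
/-- `z` avoids the four vincular patterns 2-4-51-3, 4-2-51-3, 3-51-2-4 and 3-51-4-2
(the entries playing the roles of 5 and 1 must be adjacent); such permutations are
the 2-clumped permutations. -/
def Avoids2Clumped {n : ℕ} (z : Equiv.Perm (Fin n)) : Prop :=
  (¬∃ i1 i2 i3 i3' i5 : Fin n, i1 < i2 ∧ i2 < i3 ∧ (i3' : ℕ) = (i3 : ℕ) + 1 ∧ i3' < i5 ∧
      z i3' < z i1 ∧ z i1 < z i5 ∧ z i5 < z i2 ∧ z i2 < z i3) ∧
  (¬∃ i1 i2 i3 i3' i5 : Fin n, i1 < i2 ∧ i2 < i3 ∧ (i3' : ℕ) = (i3 : ℕ) + 1 ∧ i3' < i5 ∧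
      z i3' < z i2 ∧ z i2 < z i5 ∧ z i5 < z i1 ∧ z i1 < z i3) ∧
  (¬∃ i1 i2 i2' i4 i5 : Fin n, i1 < i2 ∧ (i2' : ℕ) = (i2 : ℕ) + 1 ∧ i2' < i4 ∧ i4 < i5 ∧
      z i2' < z i4 ∧ z i4 < z i1 ∧ z i1 < z i5 ∧ z i5 < z i2) ∧
  (¬∃ i1 i2 i2' i4 i5 : Fin n, i1 < i2 ∧ (i2' : ℕ) = (i2 : ℕ) + 1 ∧ i2' < i4 ∧ i4 < i5 ∧
      z i2' < z i5 ∧ z i5 < z i1 ∧ z i1 < z i4 ∧ z i4 < z i2)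

lemma vconcat_lt {p q : ℕ} (x : Equiv.Perm (Fin p)) (y : Equiv.Perm (Fin q))
    (i : Fin (p+q)) (h : (i:ℕ) < q) :
    ((vconcat x y) i : ℕ) = p + (y ⟨i, h⟩ : ℕ) := by
  have : (finCongr (Nat.add_comm p q) i : Fin (q+p)) = Fin.castAdd p ⟨i, h⟩ := by
    ext; simp
  simp only [vconcat, Equiv.trans_apply]
  rw [this, finSumFinEquiv_symm_apply_castAdd]
  simp

lemma vconcat_ge {p q : ℕ} (x : Equiv.Perm (Fin p)) (y : Equiv.Perm (Fin q))
    (i : Fin (p+q)) (h : q ≤ (i:ℕ)) :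
    ((vconcat x y) i : ℕ) = (x ⟨(i:ℕ) - q, by omega⟩ : ℕ) := by
  have : (finCongr (Nat.add_comm p q) i : Fin (q+p)) = Fin.natAdd q ⟨(i:ℕ) - q, by omega⟩ := by
    ext; simp; omega
  simp only [vconcat, Equiv.trans_apply]
  rw [this, finSumFinEquiv_symm_apply_natAdd]
  simp

/-- If `x` and `y` are 2-clumped (avoid the four vincular patterns), then so is the
concatenation `y'x`. -/
theorem stmt_14 (p q : ℕ) (x : Equiv.Perm (Fin p)) (y : Equiv.Perm (Fin q))
    (hx : Avoids2Clumped x) (hy : Avoids2Clumped y) :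
    Avoids2Clumped (vconcat x y) := by
  -- a value-increasing pair cannot go from the x-block (small values) back to
  -- the y-block (large values): if `z a < z b` and `q ≤ b` then `q ≤ a`.
  have hblk : ∀ a b : Fin (p+q), vconcat x y a < vconcat x y b →
      q ≤ (b:ℕ) → q ≤ (a:ℕ) := by
    intro a b hab hb
    by_contra ha
    rw [Fin.lt_def, vconcat_lt x y a (by omega), vconcat_ge x y b hb] at hab
    have := (x ⟨(b:ℕ)-q, by omega⟩).isLt
    omega
  refine ⟨?_, ?_, ?_, ?_⟩
  -- pattern 1 : 2-4-51-3 ; values z i3' < z i1 < z i5 < z i2 < z i3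
  · rintro ⟨i1, i2, i3, i3', i5, h12, h23, h33', h35, v31, v15, v52, v23⟩
    have e15 := hblk _ _ v15
    rw [Fin.lt_def] at h12 h23 h35 v31 v15 v52 v23
    by_cases hc : (i5:ℕ) < q
    · have q5 : (i5:ℕ) < q := hc
      have q1 : (i1:ℕ) < q := by omega
      have q2 : (i2:ℕ) < q := by omega
      have q3 : (i3:ℕ) < q := by omega
      have q3' : (i3':ℕ) < q := by omega
      simp only [vconcat_lt x y i1 q1, vconcat_lt x y i2 q2, vconcat_lt x y i3 q3,
          vconcat_lt x y i3' q3', vconcat_lt x y i5 q5] at v31 v15 v52 v23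
      exact hy.1 ⟨⟨i1, q1⟩, ⟨i2, q2⟩, ⟨i3, q3⟩, ⟨i3', q3'⟩, ⟨i5, q5⟩,
        Fin.mk_lt_mk.mpr h12, Fin.mk_lt_mk.mpr h23, h33', Fin.mk_lt_mk.mpr h35,
        by rw [Fin.lt_def]; omega, by rw [Fin.lt_def]; omega,
        by rw [Fin.lt_def]; omega, by rw [Fin.lt_def]; omega⟩
    · have q5 : q ≤ (i5:ℕ) := by omega
      have q1 : q ≤ (i1:ℕ) := e15 q5
      have q2 : q ≤ (i2:ℕ) := by omega
      have q3 : q ≤ (i3:ℕ) := by omega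
      have q3' : q ≤ (i3':ℕ) := by omega
      simp only [vconcat_ge x y i1 q1, vconcat_ge x y i2 q2, vconcat_ge x y i3 q3,
          vconcat_ge x y i3' q3', vconcat_ge x y i5 q5] at v31 v15 v52 v23
      exact hx.1 ⟨⟨(i1:ℕ)-q, by omega⟩, ⟨(i2:ℕ)-q, by omega⟩, ⟨(i3:ℕ)-q, by omega⟩,
        ⟨(i3':ℕ)-q, by omega⟩, ⟨(i5:ℕ)-q, by omega⟩,
        Fin.mk_lt_mk.mpr (by omega), Fin.mk_lt_mk.mpr (by omega),
        by show (i3':ℕ)-q = (i3:ℕ)-q + 1; omega, Fin.mk_lt_mk.mpr (by omega),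
        by rw [Fin.lt_def]; omega, by rw [Fin.lt_def]; omega,
        by rw [Fin.lt_def]; omega, by rw [Fin.lt_def]; omega⟩
  -- pattern 2 : 4-2-51-3 ; values z i3' < z i2 < z i5 < z i1 < z i3
  · rintro ⟨i1, i2, i3, i3', i5, h12, h23, h33', h35, v32, v25, v51, v13⟩
    have e13 := hblk _ _ v13
    have e25 := hblk _ _ v25
    rw [Fin.lt_def] at h12 h23 h35 v32 v25 v51 v13
    by_cases hc : (i5:ℕ) < q
    · have q5 : (i5:ℕ) < q := hc
      have q1 : (i1:ℕ) < q := by omega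
      have q2 : (i2:ℕ) < q := by omega
      have q3 : (i3:ℕ) < q := by omega
      have q3' : (i3':ℕ) < q := by omega
      simp only [vconcat_lt x y i1 q1, vconcat_lt x y i2 q2, vconcat_lt x y i3 q3,
          vconcat_lt x y i3' q3', vconcat_lt x y i5 q5] at v32 v25 v51 v13
      exact hy.2.1 ⟨⟨i1, q1⟩, ⟨i2, q2⟩, ⟨i3, q3⟩, ⟨i3', q3'⟩, ⟨i5, q5⟩,
        Fin.mk_lt_mk.mpr h12, Fin.mk_lt_mk.mpr h23, h33', Fin.mk_lt_mk.mpr h35,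
        by rw [Fin.lt_def]; omega, by rw [Fin.lt_def]; omega,
        by rw [Fin.lt_def]; omega, by rw [Fin.lt_def]; omega⟩
    · have q5 : q ≤ (i5:ℕ) := by omega
      have q2 : q ≤ (i2:ℕ) := e25 q5
      have q3 : q ≤ (i3:ℕ) := by omega
      have q1 : q ≤ (i1:ℕ) := e13 q3
      have q3' : q ≤ (i3':ℕ) := by omega
      simp only [vconcat_ge x y i1 q1, vconcat_ge x y i2 q2, vconcat_ge x y i3 q3,
          vconcat_ge x y i3' q3', vconcat_ge x y i5 q5] at v32 v25 v51 v13
      exact hx.2.1 ⟨⟨(i1:ℕ)-q, by omega⟩, ⟨(i2:ℕ)-q, by omega⟩, ⟨(i3:ℕ)-q, by omega⟩,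
        ⟨(i3':ℕ)-q, by omega⟩, ⟨(i5:ℕ)-q, by omega⟩,
        Fin.mk_lt_mk.mpr (by omega), Fin.mk_lt_mk.mpr (by omega),
        by show (i3':ℕ)-q = (i3:ℕ)-q + 1; omega, Fin.mk_lt_mk.mpr (by omega),
        by rw [Fin.lt_def]; omega, by rw [Fin.lt_def]; omega,
        by rw [Fin.lt_def]; omega, by rw [Fin.lt_def]; omega⟩
  -- pattern 3 : 3-51-2-4 ; values z i2' < z i4 < z i1 < z i5 < z i2
  · rintro ⟨i1, i2, i2', i4, i5, h12, h22', h24, h45, v24, v41, v15, v52⟩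
    have e15 := hblk _ _ v15
    rw [Fin.lt_def] at h12 h24 h45 v24 v41 v15 v52
    by_cases hc : (i5:ℕ) < q
    · have q5 : (i5:ℕ) < q := hc
      have q1 : (i1:ℕ) < q := by omega
      have q2 : (i2:ℕ) < q := by omega
      have q2' : (i2':ℕ) < q := by omega
      have q4 : (i4:ℕ) < q := by omega
      simp only [vconcat_lt x y i1 q1, vconcat_lt x y i2 q2, vconcat_lt x y i2' q2',
          vconcat_lt x y i4 q4, vconcat_lt x y i5 q5] at v24 v41 v15 v52
      exact hy.2.2.1 ⟨⟨i1, q1⟩, ⟨i2, q2⟩, ⟨i2', q2'⟩, ⟨i4, q4⟩, ⟨i5, q5⟩,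
        Fin.mk_lt_mk.mpr h12, h22', Fin.mk_lt_mk.mpr h24, Fin.mk_lt_mk.mpr h45,
        by rw [Fin.lt_def]; omega, by rw [Fin.lt_def]; omega,
        by rw [Fin.lt_def]; omega, by rw [Fin.lt_def]; omega⟩
    · have q5 : q ≤ (i5:ℕ) := by omega
      have q1 : q ≤ (i1:ℕ) := e15 q5
      have q2 : q ≤ (i2:ℕ) := by omega
      have q2' : q ≤ (i2':ℕ) := by omega
      have q4 : q ≤ (i4:ℕ) := by omega
      simp only [vconcat_ge x y i1 q1, vconcat_ge x y i2 q2, vconcat_ge x y i2' q2',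
          vconcat_ge x y i4 q4, vconcat_ge x y i5 q5] at v24 v41 v15 v52
      exact hx.2.2.1 ⟨⟨(i1:ℕ)-q, by omega⟩, ⟨(i2:ℕ)-q, by omega⟩, ⟨(i2':ℕ)-q, by omega⟩,
        ⟨(i4:ℕ)-q, by omega⟩, ⟨(i5:ℕ)-q, by omega⟩,
        Fin.mk_lt_mk.mpr (by omega), by show (i2':ℕ)-q = (i2:ℕ)-q + 1; omega,
        Fin.mk_lt_mk.mpr (by omega), Fin.mk_lt_mk.mpr (by omega),
        by rw [Fin.lt_def]; omega, by rw [Fin.lt_def]; omega,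
        by rw [Fin.lt_def]; omega, by rw [Fin.lt_def]; omega⟩
  -- pattern 4 : 3-51-4-2 ; values z i2' < z i5 < z i1 < z i4 < z i2
  · rintro ⟨i1, i2, i2', i4, i5, h12, h22', h24, h45, v25, v51, v14, v42⟩
    have e14 := hblk _ _ v14
    have e25 := hblk _ _ v25
    rw [Fin.lt_def] at h12 h24 h45 v25 v51 v14 v42
    by_cases hc : (i5:ℕ) < q
    · have q5 : (i5:ℕ) < q := hc
      have q1 : (i1:ℕ) < q := by omega
      have q2 : (i2:ℕ) < q := by omega
      have q2' : (i2':ℕ) < q := by omega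
      have q4 : (i4:ℕ) < q := by omega
      simp only [vconcat_lt x y i1 q1, vconcat_lt x y i2 q2, vconcat_lt x y i2' q2',
          vconcat_lt x y i4 q4, vconcat_lt x y i5 q5] at v25 v51 v14 v42
      exact hy.2.2.2 ⟨⟨i1, q1⟩, ⟨i2, q2⟩, ⟨i2', q2'⟩, ⟨i4, q4⟩, ⟨i5, q5⟩,
        Fin.mk_lt_mk.mpr h12, h22', Fin.mk_lt_mk.mpr h24, Fin.mk_lt_mk.mpr h45,
        by rw [Fin.lt_def]; omega, by rw [Fin.lt_def]; omega,
        by rw [Fin.lt_def]; omega, by rw [Fin.lt_def]; omega⟩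
    · have q5 : q ≤ (i5:ℕ) := by omega
      have q2' : q ≤ (i2':ℕ) := e25 q5
      have q4 : q ≤ (i4:ℕ) := by omega
      have q1 : q ≤ (i1:ℕ) := e14 q4
      have q2 : q ≤ (i2:ℕ) := by omega
      simp only [vconcat_ge x y i1 q1, vconcat_ge x y i2 q2, vconcat_ge x y i2' q2',
          vconcat_ge x y i4 q4, vconcat_ge x y i5 q5] at v25 v51 v14 v42
      exact hx.2.2.2 ⟨⟨(i1:ℕ)-q, by omega⟩, ⟨(i2:ℕ)-q, by omega⟩, ⟨(i2':ℕ)-q, by omega⟩,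
        ⟨(i4:ℕ)-q, by omega⟩, ⟨(i5:ℕ)-q, by omega⟩,
        Fin.mk_lt_mk.mpr (by omega), by show (i2':ℕ)-q = (i2:ℕ)-q + 1; omega,
        Fin.mk_lt_mk.mpr (by omega), Fin.mk_lt_mk.mpr (by omega),
        by rw [Fin.lt_def]; omega, by rw [Fin.lt_def]; omega,
        by rw [Fin.lt_def]; omega, by rw [Fin.lt_def]; omega⟩
end

section
/- If x ∈ S_p avoids all four vincular patterns 2-4-51-3, 4-2-51-3, 3-51-2-4, 3-51-4-2, and y ∈ S_q also avoids these patterns, then the concatenation xy' ∈ S_{p+q} (where y' = (y_1+p)...(y_q+p)) also avoids all four patterns. -/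
private lemma flt {n : ℕ} {a b : Fin n} (h : (a : ℕ) < (b : ℕ)) : a < b := h

private lemma hc_val_lt {p q : ℕ} (x : Equiv.Perm (Fin p)) (y : Equiv.Perm (Fin q))
    (i : Fin (p+q)) (h : (i:ℕ) < p) :
    ((hconcat x y) i : ℕ) = (x ⟨i, h⟩ : ℕ) := by
  have e : i = Fin.castAdd q ⟨i, h⟩ := by ext; rfl
  conv_lhs => rw [e]
  unfold hconcat
  simp only [Equiv.trans_apply, Equiv.sumCongr_apply,
    finSumFinEquiv_symm_apply_castAdd, Sum.map_inl, finSumFinEquiv_apply_left,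
    Fin.coe_castAdd]

private lemma hc_val_ge {p q : ℕ} (x : Equiv.Perm (Fin p)) (y : Equiv.Perm (Fin q))
    (i : Fin (p+q)) (h : p ≤ (i:ℕ)) :
    ((hconcat x y) i : ℕ) = (y ⟨(i:ℕ) - p, by omega⟩ : ℕ) + p := by
  have e : i = Fin.natAdd p ⟨(i:ℕ) - p, by omega⟩ := by ext; simp; omega
  conv_lhs => rw [e]
  unfold hconcat
  simp only [Equiv.trans_apply, Equiv.sumCongr_apply,
    finSumFinEquiv_symm_apply_natAdd, Sum.map_inr, finSumFinEquiv_apply_right,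
    Fin.coe_natAdd]
  omega

private lemma hc_small {p q : ℕ} (x : Equiv.Perm (Fin p)) (y : Equiv.Perm (Fin q))
    (i : Fin (p+q)) (h : (i:ℕ) < p) : ((hconcat x y) i : ℕ) < p := by
  rw [hc_val_lt x y i h]; exact (x ⟨i, h⟩).is_lt

private lemma hc_idx_small {p q : ℕ} (x : Equiv.Perm (Fin p)) (y : Equiv.Perm (Fin q))
    (i : Fin (p+q)) (h : ((hconcat x y) i : ℕ) < p) : (i:ℕ) < p := by
  by_contra hc
  have := hc_val_ge x y i (by omega)
  omega

/-- If `x` and `y` are 2-clumped (avoid the four vincular patterns), then so is the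
concatenation `xy'`. -/
theorem stmt_15 (p q : ℕ) (x : Equiv.Perm (Fin p)) (y : Equiv.Perm (Fin q))
    (hx : Avoids2Clumped x) (hy : Avoids2Clumped y) :
    Avoids2Clumped (hconcat x y) := by

  refine ⟨?_, ?_, ?_, ?_⟩
  · rintro ⟨i1, i2, i3, i3', i5, h12, h23, hadj, h35, v1, v2, v3, v4⟩
    have H12 : (i1:ℕ) < i2 := h12
    have H23 : (i2:ℕ) < i3 := h23
    have H35 : (i3':ℕ) < i5 := h35
    have V1 : ((hconcat x y) i3' : ℕ) < ((hconcat x y) i1 : ℕ) := v1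
    have V2 : ((hconcat x y) i1 : ℕ) < ((hconcat x y) i5 : ℕ) := v2
    have V3 : ((hconcat x y) i5 : ℕ) < ((hconcat x y) i2 : ℕ) := v3
    have V4 : ((hconcat x y) i2 : ℕ) < ((hconcat x y) i3 : ℕ) := v4
    by_cases hb : (i1:ℕ) < p
    · have w1 : ((hconcat x y) i1 : ℕ) < p := hc_small x y i1 hb
      have hi3' : (i3':ℕ) < p := hc_idx_small x y i3' (by omega)
      have hi3 : (i3:ℕ) < p := by omega
      have hi2 : (i2:ℕ) < p := by omega
      have w3 : ((hconcat x y) i3 : ℕ) < p := hc_small x y i3 hi3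
      have hi5 : (i5:ℕ) < p := hc_idx_small x y i5 (by omega)
      have e1 : ((hconcat x y) i1 : ℕ) = (x ⟨(i1:ℕ), hb⟩ : ℕ) := hc_val_lt x y i1 hb
      have e2 : ((hconcat x y) i2 : ℕ) = (x ⟨(i2:ℕ), hi2⟩ : ℕ) := hc_val_lt x y i2 hi2
      have e3 : ((hconcat x y) i3 : ℕ) = (x ⟨(i3:ℕ), hi3⟩ : ℕ) := hc_val_lt x y i3 hi3
      have e3' : ((hconcat x y) i3' : ℕ) = (x ⟨(i3':ℕ), hi3'⟩ : ℕ) := hc_val_lt x y i3' hi3'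
      have e5 : ((hconcat x y) i5 : ℕ) = (x ⟨(i5:ℕ), hi5⟩ : ℕ) := hc_val_lt x y i5 hi5
      exact hx.1 ⟨⟨(i1:ℕ), hb⟩, ⟨(i2:ℕ), hi2⟩, ⟨(i3:ℕ), hi3⟩, ⟨(i3':ℕ), hi3'⟩, ⟨(i5:ℕ), hi5⟩,
        Fin.mk_lt_mk.mpr (by omega), Fin.mk_lt_mk.mpr (by omega), hadj, Fin.mk_lt_mk.mpr (by omega),
        flt (by omega), flt (by omega), flt (by omega), flt (by omega)⟩
    · have hi1 : p ≤ (i1:ℕ) := by omega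
      have hi2 : p ≤ (i2:ℕ) := by omega
      have hi3 : p ≤ (i3:ℕ) := by omega
      have hi3' : p ≤ (i3':ℕ) := by omega
      have hi5 : p ≤ (i5:ℕ) := by omega
      have l1 := i1.is_lt; have l2 := i2.is_lt; have l3 := i3.is_lt
      have l3' := i3'.is_lt; have l5 := i5.is_lt
      have q1 : (i1:ℕ) - p < q := by omega
      have q2 : (i2:ℕ) - p < q := by omega
      have q3 : (i3:ℕ) - p < q := by omega
      have q3' : (i3':ℕ) - p < q := by omega
      have q5 : (i5:ℕ) - p < q := by omega
      have e1 : ((hconcat x y) i1 : ℕ) = (y ⟨(i1:ℕ) - p, q1⟩ : ℕ) + p := hc_val_ge x y i1 hi1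
      have e2 : ((hconcat x y) i2 : ℕ) = (y ⟨(i2:ℕ) - p, q2⟩ : ℕ) + p := hc_val_ge x y i2 hi2
      have e3 : ((hconcat x y) i3 : ℕ) = (y ⟨(i3:ℕ) - p, q3⟩ : ℕ) + p := hc_val_ge x y i3 hi3
      have e3' : ((hconcat x y) i3' : ℕ) = (y ⟨(i3':ℕ) - p, q3'⟩ : ℕ) + p := hc_val_ge x y i3' hi3'
      have e5 : ((hconcat x y) i5 : ℕ) = (y ⟨(i5:ℕ) - p, q5⟩ : ℕ) + p := hc_val_ge x y i5 hi5
      exact hy.1 ⟨⟨(i1:ℕ) - p, q1⟩, ⟨(i2:ℕ) - p, q2⟩, ⟨(i3:ℕ) - p, q3⟩,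
        ⟨(i3':ℕ) - p, q3'⟩, ⟨(i5:ℕ) - p, q5⟩,
        Fin.mk_lt_mk.mpr (by omega), Fin.mk_lt_mk.mpr (by omega), show (i3':ℕ) - p = (i3:ℕ) - p + 1 by omega,
        Fin.mk_lt_mk.mpr (by omega),
        flt (by omega), flt (by omega), flt (by omega), flt (by omega)⟩
  · rintro ⟨i1, i2, i3, i3', i5, h12, h23, hadj, h35, v1, v2, v3, v4⟩
    have H12 : (i1:ℕ) < i2 := h12
    have H23 : (i2:ℕ) < i3 := h23
    have H35 : (i3':ℕ) < i5 := h35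
    have V1 : ((hconcat x y) i3' : ℕ) < ((hconcat x y) i2 : ℕ) := v1
    have V2 : ((hconcat x y) i2 : ℕ) < ((hconcat x y) i5 : ℕ) := v2
    have V3 : ((hconcat x y) i5 : ℕ) < ((hconcat x y) i1 : ℕ) := v3
    have V4 : ((hconcat x y) i1 : ℕ) < ((hconcat x y) i3 : ℕ) := v4
    by_cases hb : (i1:ℕ) < p
    · have w1 : ((hconcat x y) i1 : ℕ) < p := hc_small x y i1 hb
      have hi5 : (i5:ℕ) < p := hc_idx_small x y i5 (by omega)
      have hi3' : (i3':ℕ) < p := hc_idx_small x y i3' (by omega)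
      have hi3 : (i3:ℕ) < p := by omega
      have hi2 : (i2:ℕ) < p := by omega
      have e1 : ((hconcat x y) i1 : ℕ) = (x ⟨(i1:ℕ), hb⟩ : ℕ) := hc_val_lt x y i1 hb
      have e2 : ((hconcat x y) i2 : ℕ) = (x ⟨(i2:ℕ), hi2⟩ : ℕ) := hc_val_lt x y i2 hi2
      have e3 : ((hconcat x y) i3 : ℕ) = (x ⟨(i3:ℕ), hi3⟩ : ℕ) := hc_val_lt x y i3 hi3
      have e3' : ((hconcat x y) i3' : ℕ) = (x ⟨(i3':ℕ), hi3'⟩ : ℕ) := hc_val_lt x y i3' hi3'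
      have e5 : ((hconcat x y) i5 : ℕ) = (x ⟨(i5:ℕ), hi5⟩ : ℕ) := hc_val_lt x y i5 hi5
      exact hx.2.1 ⟨⟨(i1:ℕ), hb⟩, ⟨(i2:ℕ), hi2⟩, ⟨(i3:ℕ), hi3⟩, ⟨(i3':ℕ), hi3'⟩, ⟨(i5:ℕ), hi5⟩,
        Fin.mk_lt_mk.mpr (by omega), Fin.mk_lt_mk.mpr (by omega), hadj, Fin.mk_lt_mk.mpr (by omega),
        flt (by omega), flt (by omega), flt (by omega), flt (by omega)⟩
    · have hi1 : p ≤ (i1:ℕ) := by omega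
      have hi2 : p ≤ (i2:ℕ) := by omega
      have hi3 : p ≤ (i3:ℕ) := by omega
      have hi3' : p ≤ (i3':ℕ) := by omega
      have hi5 : p ≤ (i5:ℕ) := by omega
      have l1 := i1.is_lt; have l2 := i2.is_lt; have l3 := i3.is_lt
      have l3' := i3'.is_lt; have l5 := i5.is_lt
      have q1 : (i1:ℕ) - p < q := by omega
      have q2 : (i2:ℕ) - p < q := by omega
      have q3 : (i3:ℕ) - p < q := by omega
      have q3' : (i3':ℕ) - p < q := by omega
      have q5 : (i5:ℕ) - p < q := by omega
      have e1 : ((hconcat x y) i1 : ℕ) = (y ⟨(i1:ℕ) - p, q1⟩ : ℕ) + p := hc_val_ge x y i1 hi1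
      have e2 : ((hconcat x y) i2 : ℕ) = (y ⟨(i2:ℕ) - p, q2⟩ : ℕ) + p := hc_val_ge x y i2 hi2
      have e3 : ((hconcat x y) i3 : ℕ) = (y ⟨(i3:ℕ) - p, q3⟩ : ℕ) + p := hc_val_ge x y i3 hi3
      have e3' : ((hconcat x y) i3' : ℕ) = (y ⟨(i3':ℕ) - p, q3'⟩ : ℕ) + p := hc_val_ge x y i3' hi3'
      have e5 : ((hconcat x y) i5 : ℕ) = (y ⟨(i5:ℕ) - p, q5⟩ : ℕ) + p := hc_val_ge x y i5 hi5
      exact hy.2.1 ⟨⟨(i1:ℕ) - p, q1⟩, ⟨(i2:ℕ) - p, q2⟩, ⟨(i3:ℕ) - p, q3⟩,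
        ⟨(i3':ℕ) - p, q3'⟩, ⟨(i5:ℕ) - p, q5⟩,
        Fin.mk_lt_mk.mpr (by omega), Fin.mk_lt_mk.mpr (by omega), show (i3':ℕ) - p = (i3:ℕ) - p + 1 by omega,
        Fin.mk_lt_mk.mpr (by omega),
        flt (by omega), flt (by omega), flt (by omega), flt (by omega)⟩
  · rintro ⟨i1, i2, i2', i4, i5, h12, hadj, h24, h45, v1, v2, v3, v4⟩
    have H12 : (i1:ℕ) < i2 := h12
    have H24 : (i2':ℕ) < i4 := h24
    have H45 : (i4:ℕ) < i5 := h45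
    have V1 : ((hconcat x y) i2' : ℕ) < ((hconcat x y) i4 : ℕ) := v1
    have V2 : ((hconcat x y) i4 : ℕ) < ((hconcat x y) i1 : ℕ) := v2
    have V3 : ((hconcat x y) i1 : ℕ) < ((hconcat x y) i5 : ℕ) := v3
    have V4 : ((hconcat x y) i5 : ℕ) < ((hconcat x y) i2 : ℕ) := v4
    by_cases hb : (i1:ℕ) < p
    · have w1 : ((hconcat x y) i1 : ℕ) < p := hc_small x y i1 hb
      have hi4 : (i4:ℕ) < p := hc_idx_small x y i4 (by omega)
      have hi2' : (i2':ℕ) < p := by omega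
      have hi2 : (i2:ℕ) < p := by omega
      have w2 : ((hconcat x y) i2 : ℕ) < p := hc_small x y i2 hi2
      have hi5 : (i5:ℕ) < p := hc_idx_small x y i5 (by omega)
      have e1 : ((hconcat x y) i1 : ℕ) = (x ⟨(i1:ℕ), hb⟩ : ℕ) := hc_val_lt x y i1 hb
      have e2 : ((hconcat x y) i2 : ℕ) = (x ⟨(i2:ℕ), hi2⟩ : ℕ) := hc_val_lt x y i2 hi2
      have e2' : ((hconcat x y) i2' : ℕ) = (x ⟨(i2':ℕ), hi2'⟩ : ℕ) := hc_val_lt x y i2' hi2'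
      have e4 : ((hconcat x y) i4 : ℕ) = (x ⟨(i4:ℕ), hi4⟩ : ℕ) := hc_val_lt x y i4 hi4
      have e5 : ((hconcat x y) i5 : ℕ) = (x ⟨(i5:ℕ), hi5⟩ : ℕ) := hc_val_lt x y i5 hi5
      exact hx.2.2.1 ⟨⟨(i1:ℕ), hb⟩, ⟨(i2:ℕ), hi2⟩, ⟨(i2':ℕ), hi2'⟩, ⟨(i4:ℕ), hi4⟩, ⟨(i5:ℕ), hi5⟩,
        Fin.mk_lt_mk.mpr (by omega), hadj, Fin.mk_lt_mk.mpr (by omega), Fin.mk_lt_mk.mpr (by omega),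
        flt (by omega), flt (by omega), flt (by omega), flt (by omega)⟩
    · have hi1 : p ≤ (i1:ℕ) := by omega
      have hi2 : p ≤ (i2:ℕ) := by omega
      have hi2' : p ≤ (i2':ℕ) := by omega
      have hi4 : p ≤ (i4:ℕ) := by omega
      have hi5 : p ≤ (i5:ℕ) := by omega
      have l1 := i1.is_lt; have l2 := i2.is_lt; have l2' := i2'.is_lt
      have l4 := i4.is_lt; have l5 := i5.is_lt
      have q1 : (i1:ℕ) - p < q := by omega
      have q2 : (i2:ℕ) - p < q := by omega
      have q2' : (i2':ℕ) - p < q := by omega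
      have q4 : (i4:ℕ) - p < q := by omega
      have q5 : (i5:ℕ) - p < q := by omega
      have e1 : ((hconcat x y) i1 : ℕ) = (y ⟨(i1:ℕ) - p, q1⟩ : ℕ) + p := hc_val_ge x y i1 hi1
      have e2 : ((hconcat x y) i2 : ℕ) = (y ⟨(i2:ℕ) - p, q2⟩ : ℕ) + p := hc_val_ge x y i2 hi2
      have e2' : ((hconcat x y) i2' : ℕ) = (y ⟨(i2':ℕ) - p, q2'⟩ : ℕ) + p := hc_val_ge x y i2' hi2'
      have e4 : ((hconcat x y) i4 : ℕ) = (y ⟨(i4:ℕ) - p, q4⟩ : ℕ) + p := hc_val_ge x y i4 hi4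
      have e5 : ((hconcat x y) i5 : ℕ) = (y ⟨(i5:ℕ) - p, q5⟩ : ℕ) + p := hc_val_ge x y i5 hi5
      exact hy.2.2.1 ⟨⟨(i1:ℕ) - p, q1⟩, ⟨(i2:ℕ) - p, q2⟩, ⟨(i2':ℕ) - p, q2'⟩,
        ⟨(i4:ℕ) - p, q4⟩, ⟨(i5:ℕ) - p, q5⟩,
        Fin.mk_lt_mk.mpr (by omega), show (i2':ℕ) - p = (i2:ℕ) - p + 1 by omega,
        Fin.mk_lt_mk.mpr (by omega), Fin.mk_lt_mk.mpr (by omega),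
        flt (by omega), flt (by omega), flt (by omega), flt (by omega)⟩
  · rintro ⟨i1, i2, i2', i4, i5, h12, hadj, h24, h45, v1, v2, v3, v4⟩
    have H12 : (i1:ℕ) < i2 := h12
    have H24 : (i2':ℕ) < i4 := h24
    have H45 : (i4:ℕ) < i5 := h45
    have V1 : ((hconcat x y) i2' : ℕ) < ((hconcat x y) i5 : ℕ) := v1
    have V2 : ((hconcat x y) i5 : ℕ) < ((hconcat x y) i1 : ℕ) := v2
    have V3 : ((hconcat x y) i1 : ℕ) < ((hconcat x y) i4 : ℕ) := v3
    have V4 : ((hconcat x y) i4 : ℕ) < ((hconcat x y) i2 : ℕ) := v4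
    by_cases hb : (i1:ℕ) < p
    · have w1 : ((hconcat x y) i1 : ℕ) < p := hc_small x y i1 hb
      have hi5 : (i5:ℕ) < p := hc_idx_small x y i5 (by omega)
      have hi4 : (i4:ℕ) < p := by omega
      have hi2' : (i2':ℕ) < p := by omega
      have hi2 : (i2:ℕ) < p := by omega
      have e1 : ((hconcat x y) i1 : ℕ) = (x ⟨(i1:ℕ), hb⟩ : ℕ) := hc_val_lt x y i1 hb
      have e2 : ((hconcat x y) i2 : ℕ) = (x ⟨(i2:ℕ), hi2⟩ : ℕ) := hc_val_lt x y i2 hi2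
      have e2' : ((hconcat x y) i2' : ℕ) = (x ⟨(i2':ℕ), hi2'⟩ : ℕ) := hc_val_lt x y i2' hi2'
      have e4 : ((hconcat x y) i4 : ℕ) = (x ⟨(i4:ℕ), hi4⟩ : ℕ) := hc_val_lt x y i4 hi4
      have e5 : ((hconcat x y) i5 : ℕ) = (x ⟨(i5:ℕ), hi5⟩ : ℕ) := hc_val_lt x y i5 hi5
      exact hx.2.2.2 ⟨⟨(i1:ℕ), hb⟩, ⟨(i2:ℕ), hi2⟩, ⟨(i2':ℕ), hi2'⟩, ⟨(i4:ℕ), hi4⟩, ⟨(i5:ℕ), hi5⟩,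
        Fin.mk_lt_mk.mpr (by omega), hadj, Fin.mk_lt_mk.mpr (by omega), Fin.mk_lt_mk.mpr (by omega),
        flt (by omega), flt (by omega), flt (by omega), flt (by omega)⟩
    · have hi1 : p ≤ (i1:ℕ) := by omega
      have hi2 : p ≤ (i2:ℕ) := by omega
      have hi2' : p ≤ (i2':ℕ) := by omega
      have hi4 : p ≤ (i4:ℕ) := by omega
      have hi5 : p ≤ (i5:ℕ) := by omega
      have l1 := i1.is_lt; have l2 := i2.is_lt; have l2' := i2'.is_lt
      have l4 := i4.is_lt; have l5 := i5.is_lt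
      have q1 : (i1:ℕ) - p < q := by omega
      have q2 : (i2:ℕ) - p < q := by omega
      have q2' : (i2':ℕ) - p < q := by omega
      have q4 : (i4:ℕ) - p < q := by omega
      have q5 : (i5:ℕ) - p < q := by omega
      have e1 : ((hconcat x y) i1 : ℕ) = (y ⟨(i1:ℕ) - p, q1⟩ : ℕ) + p := hc_val_ge x y i1 hi1
      have e2 : ((hconcat x y) i2 : ℕ) = (y ⟨(i2:ℕ) - p, q2⟩ : ℕ) + p := hc_val_ge x y i2 hi2
      have e2' : ((hconcat x y) i2' : ℕ) = (y ⟨(i2':ℕ) - p, q2'⟩ : ℕ) + p := hc_val_ge x y i2' hi2'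
      have e4 : ((hconcat x y) i4 : ℕ) = (y ⟨(i4:ℕ) - p, q4⟩ : ℕ) + p := hc_val_ge x y i4 hi4
      have e5 : ((hconcat x y) i5 : ℕ) = (y ⟨(i5:ℕ) - p, q5⟩ : ℕ) + p := hc_val_ge x y i5 hi5
      exact hy.2.2.2 ⟨⟨(i1:ℕ) - p, q1⟩, ⟨(i2:ℕ) - p, q2⟩, ⟨(i2':ℕ) - p, q2'⟩,
        ⟨(i4:ℕ) - p, q4⟩, ⟨(i5:ℕ) - p, q5⟩,
        Fin.mk_lt_mk.mpr (by omega), show (i2':ℕ) - p = (i2:ℕ) - p + 1 by omega,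
        Fin.mk_lt_mk.mpr (by omega), Fin.mk_lt_mk.mpr (by omega),
        flt (by omega), flt (by omega), flt (by omega), flt (by omega)⟩
end

section
/- A permutation y ∈ S_n is 2-clumped (every descent of y has at most 2 associated clumps) if and only if y avoids the four vincular patterns 2-4-51-3, 4-2-51-3, 3-51-2-4, and 3-51-4-2. -/
/-- `S` is a set of consecutive values `{a, …, b}` strictly between `y i'` and `y i`
(the values of a descent of `y` at adjacent positions `i, i' = i+1`) all of whose elements
occur before position `i`, or all after position `i'`. -/
def ConsecRun {n : ℕ} (y : Equiv.Perm (Fin n)) (i i' : Fin n) (S : Set (Fin n)) : Prop :=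
  (∃ a b : Fin n, y i' < a ∧ a ≤ b ∧ b < y i ∧ S = {c : Fin n | a ≤ c ∧ c ≤ b}) ∧
  ((∀ c ∈ S, y.symm c < i) ∨ (∀ c ∈ S, i' < y.symm c))

/-- A clump of the descent of `y` at positions `i, i' = i+1`: a maximal set of consecutive
values strictly between `y i'` and `y i` occurring entirely before position `i` or
entirely after position `i'`. -/
def IsClump {n : ℕ} (y : Equiv.Perm (Fin n)) (i i' : Fin n) (S : Set (Fin n)) : Prop :=
  ConsecRun y i i' S ∧ ∀ S' : Set (Fin n), ConsecRun y i i' S' → S ⊆ S' → S' = S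

namespace Stmt16Aux

variable {n : ℕ}

/-- An "alternating triple" for the descent at `i, i'`. -/
def AltTriple (y : Equiv.Perm (Fin n)) (i i' : Fin n) : Prop :=
  ∃ v1 v2 v3 : Fin n, y i' < v1 ∧ v1 < v2 ∧ v2 < v3 ∧ v3 < y i ∧
    ¬(y.symm v1 < i ↔ y.symm v2 < i) ∧ (y.symm v1 < i ↔ y.symm v3 < i)

lemma i_lt_i' {i i' : Fin n} (hi' : (i' : ℕ) = (i : ℕ) + 1) : i < i' :=
  Fin.lt_def.mpr (by omega)

lemma pos_split (y : Equiv.Perm (Fin n)) {i i' : Fin n} (hi' : (i' : ℕ) = (i : ℕ) + 1)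
    {c : Fin n} (h1 : y i' < c) (h2 : c < y i) (h3 : ¬ y.symm c < i) : i' < y.symm c := by
  have hp : y (y.symm c) = c := y.apply_symm_apply c
  have hne1 : y.symm c ≠ i := by
    intro h; rw [h] at hp; exact (ne_of_lt h2) hp.symm
  have hne2 : y.symm c ≠ i' := by
    intro h; rw [h] at hp; exact (ne_of_lt h1) hp
  have h4 : i < y.symm c := lt_of_le_of_ne (not_lt.mp h3) (Ne.symm hne1)
  have h5 : (i : ℕ) < (y.symm c : ℕ) := Fin.lt_def.mp h4
  have h6 : (y.symm c : ℕ) ≠ (i' : ℕ) := fun h => hne2 (Fin.ext h)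
  exact Fin.lt_def.mpr (by omega)

lemma not_bef (y : Equiv.Perm (Fin n)) {i i' : Fin n} (hi' : (i' : ℕ) = (i : ℕ) + 1)
    {c : Fin n} (h : i' < y.symm c) : ¬ y.symm c < i :=
  fun h' => absurd (lt_trans (i_lt_i' hi') h) (not_lt.mpr (le_of_lt h'))

lemma exists_clump (y : Equiv.Perm (Fin n)) {i i' : Fin n} (hi' : (i' : ℕ) = (i : ℕ) + 1)
    {v : Fin n} (hv1 : y i' < v) (hv2 : v < y i) :
    ∃ S, IsClump y i i' S ∧ v ∈ S := by
  set S0 : Set (Fin n) := {c | v ≤ c ∧ c ≤ v} with hS0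
  have hv0 : v ∈ S0 := ⟨le_refl v, le_refl v⟩
  have hrun : ConsecRun y i i' S0 := by
    refine ⟨⟨v, v, hv1, le_refl v, hv2, rfl⟩, ?_⟩
    by_cases hb : y.symm v < i
    · left; intro c hc
      have : c = v := le_antisymm hc.2 hc.1
      rw [this]; exact hb
    · right; intro c hc
      have : c = v := le_antisymm hc.2 hc.1
      rw [this]; exact pos_split y hi' hv1 hv2 hb
  obtain ⟨S, hS, hmax⟩ := Set.Finite.exists_maximalFor id
    {S' : Set (Fin n) | ConsecRun y i i' S' ∧ S0 ⊆ S'} (Set.toFinite _) ⟨S0, hrun, subset_rfl⟩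
  refine ⟨S, ⟨hS.1, fun S' h1 h2 => ?_⟩, hS.2 hv0⟩
  exact le_antisymm (hmax ⟨h1, hS.2.trans h2⟩ h2) h2

/-- Every clump is a monochromatic interval. -/
lemma clump_color (y : Equiv.Perm (Fin n)) {i i' : Fin n} (hi' : (i' : ℕ) = (i : ℕ) + 1)
    {S : Set (Fin n)} (hS : ConsecRun y i i' S) :
    ∃ a b : Fin n, y i' < a ∧ a ≤ b ∧ b < y i ∧ S = {c : Fin n | a ≤ c ∧ c ≤ b} ∧
      ∃ X : Prop, ∀ c ∈ S, (y.symm c < i ↔ X) := by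
  obtain ⟨⟨a, b, h1, h2, h3, h4⟩, hcol⟩ := hS
  refine ⟨a, b, h1, h2, h3, h4, ?_⟩
  rcases hcol with hcol | hcol
  · exact ⟨True, fun c hc => by simp [hcol c hc]⟩
  · exact ⟨False, fun c hc => by simp [not_bef y hi' (hcol c hc)]⟩

lemma clump_eq_aux (y : Equiv.Perm (Fin n)) {i i' : Fin n} (hi' : (i' : ℕ) = (i : ℕ) + 1)
    (hna : ¬ AltTriple y i i') (X : Prop) {S S' : Set (Fin n)}
    (hS : IsClump y i i' S) (hS' : IsClump y i i' S')
    {a1 b1 a2 b2 : Fin n}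
    (ha1 : y i' < a1) (hab1 : a1 ≤ b1) (hb1 : b1 < y i)
    (hSeq : S = {c : Fin n | a1 ≤ c ∧ c ≤ b1})
    (ha2 : y i' < a2) (hab2 : a2 ≤ b2) (hb2 : b2 < y i)
    (hS'eq : S' = {c : Fin n | a2 ≤ c ∧ c ≤ b2})
    (hX : ∀ c ∈ S, (y.symm c < i ↔ X)) (hX' : ∀ c ∈ S', (y.symm c < i ↔ X))
    (h12 : a1 ≤ a2) : S = S' := by
  classical
  -- color of the big run
  have hcol : ∀ (U : Set (Fin n)), (∀ c ∈ U, y i' < c ∧ c < y i) →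
      (∀ c ∈ U, (y.symm c < i ↔ X)) →
      ((∀ c ∈ U, y.symm c < i) ∨ (∀ c ∈ U, i' < y.symm c)) := by
    intro U hb hc
    by_cases hX0 : X
    · left; intro c hcU; exact (hc c hcU).mpr hX0
    · right; intro c hcU
      exact pos_split y hi' (hb c hcU).1 (hb c hcU).2 (fun h => hX0 ((hc c hcU).mp h))
  by_cases hgap : b1 < a2
  · -- there is a gap between the intervals
    by_cases hall : ∀ c : Fin n, b1 < c → c < a2 → (y.symm c < i ↔ X)
    · -- all gap values have the same color: contradiction with maximality of S
      exfalso
      set U : Set (Fin n) := {c : Fin n | a1 ≤ c ∧ c ≤ b2} with hU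
      have hmemU : ∀ c ∈ U, y i' < c ∧ c < y i := fun c hc =>
        ⟨lt_of_lt_of_le ha1 hc.1, lt_of_le_of_lt hc.2 hb2⟩
      have hcolU : ∀ c ∈ U, (y.symm c < i ↔ X) := by
        intro c hc
        rcases le_or_gt c b1 with h | h
        · exact hX c (by rw [hSeq]; exact ⟨hc.1, h⟩)
        · rcases lt_or_ge c a2 with h' | h'
          · exact hall c h h'
          · exact hX' c (by rw [hS'eq]; exact ⟨h', hc.2⟩)
      have hrunU : ConsecRun y i i' U :=
        ⟨⟨a1, b2, ha1, le_trans hab1 (le_trans (le_of_lt hgap) hab2), hb2, rfl⟩,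
          hcol U hmemU hcolU⟩
      have hsub : S ⊆ U := by
        rw [hSeq]; intro c hc
        exact ⟨hc.1, le_trans hc.2 (le_trans (le_of_lt hgap) hab2)⟩
      have hUS : U = S := hS.2 U hrunU hsub
      have : a2 ∈ U := ⟨h12, hab2⟩
      rw [hUS, hSeq] at this
      exact absurd this.2 (not_le.mpr hgap)
    · -- some gap value has the other color: alternating triple
      push_neg at hall
      obtain ⟨c, hc1, hc2, hc3⟩ := hall
      have hc3' : ¬((y.symm c < i) ↔ X) := by
        rcases hc3 with ⟨h, hx⟩ | ⟨h, hx⟩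
        · exact fun hi => hx (hi.mp h)
        · exact fun hi => absurd (hi.mpr hx) (not_lt.mpr h)
      have h1 := hX b1 (by rw [hSeq]; exact ⟨hab1, le_refl b1⟩)
      have h2 := hX' a2 (by rw [hS'eq]; exact ⟨le_refl a2, hab2⟩)
      exact absurd ⟨b1, c, a2, lt_of_lt_of_le ha1 hab1, hc1, hc2, lt_of_le_of_lt hab2 hb2,
        fun h => hc3' (h.symm.trans h1), h1.trans h2.symm⟩ hna
  · -- no gap: the union is a run containing both, so S = S'
    push_neg at hgap
    set m := max b1 b2 with hm
    set U : Set (Fin n) := {c : Fin n | a1 ≤ c ∧ c ≤ m} with hU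
    have hsubS : S ⊆ U := by
      rw [hSeq]; intro c hc; exact ⟨hc.1, le_trans hc.2 (le_max_left _ _)⟩
    have hsubS' : S' ⊆ U := by
      rw [hS'eq]; intro c hc; exact ⟨le_trans h12 hc.1, le_trans hc.2 (le_max_right _ _)⟩
    have hUsplit : ∀ c ∈ U, c ∈ S ∨ c ∈ S' := by
      intro c hc
      rcases le_or_gt c b1 with h | h
      · left; rw [hSeq]; exact ⟨hc.1, h⟩
      · right; rw [hS'eq]
        refine ⟨le_trans hgap (le_of_lt h), ?_⟩
        rcases le_total b1 b2 with h' | h'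
        · exact le_trans hc.2 (max_le h' le_rfl)
        · exact absurd (lt_of_lt_of_le h (le_trans hc.2 (max_le le_rfl h'))) (lt_irrefl b1)
    have hmemU : ∀ c ∈ U, y i' < c ∧ c < y i := by
      intro c hc
      rcases hUsplit c hc with h | h
      · rw [hSeq] at h; exact ⟨lt_of_lt_of_le ha1 h.1, lt_of_le_of_lt h.2 hb1⟩
      · rw [hS'eq] at h; exact ⟨lt_of_lt_of_le ha2 h.1, lt_of_le_of_lt h.2 hb2⟩
    have hcolU : ∀ c ∈ U, (y.symm c < i ↔ X) := by
      intro c hc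
      rcases hUsplit c hc with h | h
      · exact hX c h
      · exact hX' c h
    have hrunU : ConsecRun y i i' U :=
      ⟨⟨a1, m, ha1, le_trans hab1 (le_max_left _ _), max_lt hb1 hb2, rfl⟩,
        hcol U hmemU hcolU⟩
    rw [← hS.2 U hrunU hsubS, ← hS'.2 U hrunU hsubS']

lemma clump_eq (y : Equiv.Perm (Fin n)) {i i' : Fin n} (hi' : (i' : ℕ) = (i : ℕ) + 1)
    (hna : ¬ AltTriple y i i') (X : Prop) {S S' : Set (Fin n)}
    (hS : IsClump y i i' S) (hS' : IsClump y i i' S')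
    (hX : ∀ c ∈ S, (y.symm c < i ↔ X)) (hX' : ∀ c ∈ S', (y.symm c < i ↔ X)) : S = S' := by
  obtain ⟨a1, b1, ha1, hab1, hb1, hSeq, _⟩ := clump_color y hi' hS.1
  obtain ⟨a2, b2, ha2, hab2, hb2, hS'eq, _⟩ := clump_color y hi' hS'.1
  rcases le_total a1 a2 with h | h
  · exact clump_eq_aux y hi' hna X hS hS' ha1 hab1 hb1 hSeq ha2 hab2 hb2 hS'eq hX hX' h
  · exact (clump_eq_aux y hi' hna X hS' hS ha2 hab2 hb2 hS'eq ha1 hab1 hb1 hSeq hX' hX h).symm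

/-- No alternating triple implies at most two clumps. -/
lemma ncard_le_two (y : Equiv.Perm (Fin n)) {i i' : Fin n} (hi' : (i' : ℕ) = (i : ℕ) + 1)
    (hna : ¬ AltTriple y i i') : {S : Set (Fin n) | IsClump y i i' S}.ncard ≤ 2 := by
  by_contra h
  push_neg at h
  obtain ⟨T1, T2, T3, hT1, hT2, hT3, h12, h13, h23⟩ :=
    (Set.two_lt_ncard_iff (Set.toFinite _)).mp h
  simp only [Set.mem_setOf_eq] at hT1 hT2 hT3
  obtain ⟨a1, b1, ha1, hab1, hb1, hSeq1, X1, hX1⟩ := clump_color y hi' hT1.1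
  obtain ⟨a2, b2, ha2, hab2, hb2, hSeq2, X2, hX2⟩ := clump_color y hi' hT2.1
  obtain ⟨a3, b3, ha3, hab3, hb3, hSeq3, X3, hX3⟩ := clump_color y hi' hT3.1
  by_cases hA : X1 ↔ X2
  · exact h12 (clump_eq y hi' hna X1 hT1 hT2 hX1
      (fun c hc => (hX2 c hc).trans hA.symm))
  · by_cases hB : X1 ↔ X3
    · exact h13 (clump_eq y hi' hna X1 hT1 hT3 hX1
        (fun c hc => (hX3 c hc).trans hB.symm))
    · have hC : X2 ↔ X3 := by tauto
      exact h23 (clump_eq y hi' hna X2 hT2 hT3 hX2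
        (fun c hc => (hX3 c hc).trans hC.symm))

/-- An alternating triple gives more than two clumps. -/
lemma two_lt_ncard (y : Equiv.Perm (Fin n)) {i i' : Fin n} (hi' : (i' : ℕ) = (i : ℕ) + 1)
    (hAlt : AltTriple y i i') : 2 < {S : Set (Fin n) | IsClump y i i' S}.ncard := by
  obtain ⟨v1, v2, v3, hv1, h12, h23, hv3, hne, hiff⟩ := hAlt
  have hb1 : y i' < v1 := hv1
  have hb1' : v1 < y i := lt_trans h12 (lt_trans h23 hv3)
  have hb2 : y i' < v2 := lt_trans hv1 h12
  have hb2' : v2 < y i := lt_trans h23 hv3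
  have hb3 : y i' < v3 := lt_trans hb2 h23
  have hb3' : v3 < y i := hv3
  obtain ⟨T1, hT1, hm1⟩ := exists_clump y hi' hb1 hb1'
  obtain ⟨T2, hT2, hm2⟩ := exists_clump y hi' hb2 hb2'
  obtain ⟨T3, hT3, hm3⟩ := exists_clump y hi' hb3 hb3'
  -- colors of the clumps
  obtain ⟨a1, b1, ha1, hab1, hcb1, hSeq1, X1, hX1⟩ := clump_color y hi' hT1.1
  obtain ⟨a2, b2, ha2, hab2, hcb2, hSeq2, X2, hX2⟩ := clump_color y hi' hT2.1
  obtain ⟨a3, b3, ha3, hab3, hcb3, hSeq3, X3, hX3⟩ := clump_color y hi' hT3.1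
  refine (Set.two_lt_ncard_iff (Set.toFinite _)).mpr ⟨T1, T2, T3, hT1, hT2, hT3, ?_, ?_, ?_⟩
  · intro h
    subst h
    have e1 := hX1 v1 hm1
    have e2 := hX1 v2 hm2
    exact hne (e1.trans e2.symm)
  · intro h
    subst h
    -- v1, v3 ∈ T1 so v2 ∈ T1 by convexity
    have m1 := hSeq1 ▸ hm1
    have m3 := hSeq1 ▸ hm3
    have hm2' : v2 ∈ T1 := by
      rw [hSeq1]
      exact ⟨le_trans m1.1 (le_of_lt h12), le_trans (le_of_lt h23) m3.2⟩
    have e1 := hX1 v1 hm1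
    have e2 := hX1 v2 hm2'
    exact hne (e1.trans e2.symm)
  · intro h
    subst h
    have e2 := hX2 v2 hm2
    have e3 := hX2 v3 hm3
    exact (by tauto : ¬(y.symm v2 < i ↔ y.symm v3 < i)) (e2.trans e3.symm)

end Stmt16Aux

open Stmt16Aux in
/-- A permutation is 2-clumped (every descent has at most two clumps) if and only if it
avoids the four vincular patterns 2-4-51-3, 4-2-51-3, 3-51-2-4 and 3-51-4-2. -/
theorem stmt_16 (n : ℕ) (y : Equiv.Perm (Fin n)) :
    (∀ i i' : Fin n, (i' : ℕ) = (i : ℕ) + 1 → y i' < y i →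
      {S : Set (Fin n) | IsClump y i i' S}.ncard ≤ 2) ↔ Avoids2Clumped y := by
  constructor
  · intro hcl
    refine ⟨?_, ?_, ?_, ?_⟩
    · rintro ⟨i1, i2, i3, i3', i5, h12, h23, hi3', h35, c1, c2, c3, c4⟩
      have hd : y i3' < y i3 := lt_trans c1 (lt_trans c2 (lt_trans c3 c4))
      have hAlt : AltTriple y i3 i3' := by
        refine ⟨y i1, y i5, y i2, c1, c2, c3, c4, ?_, ?_⟩ <;>
          simp only [Equiv.symm_apply_apply]
        · have h5 : ¬ i5 < i3 := not_lt.mpr (le_of_lt (lt_trans (i_lt_i' hi3') h35))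
          have h1 : i1 < i3 := lt_trans h12 h23
          tauto
        · have h1 : i1 < i3 := lt_trans h12 h23
          tauto
      exact absurd (hcl i3 i3' hi3' hd) (not_le.mpr (two_lt_ncard y hi3' hAlt))
    · rintro ⟨i1, i2, i3, i3', i5, h12, h23, hi3', h35, c1, c2, c3, c4⟩
      have hd : y i3' < y i3 := lt_trans c1 (lt_trans c2 (lt_trans c3 c4))
      have hAlt : AltTriple y i3 i3' := by
        refine ⟨y i2, y i5, y i1, c1, c2, c3, c4, ?_, ?_⟩ <;>
          simp only [Equiv.symm_apply_apply]
        · have h5 : ¬ i5 < i3 := not_lt.mpr (le_of_lt (lt_trans (i_lt_i' hi3') h35))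
          tauto
        · have h1 : i1 < i3 := lt_trans h12 h23
          tauto
      exact absurd (hcl i3 i3' hi3' hd) (not_le.mpr (two_lt_ncard y hi3' hAlt))
    · rintro ⟨i1, i2, i2', i4, i5, h12, hi2', h24, h45, c1, c2, c3, c4⟩
      have hd : y i2' < y i2 := lt_trans c1 (lt_trans c2 (lt_trans c3 c4))
      have hAlt : AltTriple y i2 i2' := by
        refine ⟨y i4, y i1, y i5, c1, c2, c3, c4, ?_, ?_⟩ <;>
          simp only [Equiv.symm_apply_apply]
        · have h4 : ¬ i4 < i2 := not_lt.mpr (le_of_lt (lt_trans (i_lt_i' hi2') h24))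
          tauto
        · have h4 : ¬ i4 < i2 := not_lt.mpr (le_of_lt (lt_trans (i_lt_i' hi2') h24))
          have h5 : ¬ i5 < i2 :=
            not_lt.mpr (le_of_lt (lt_trans (lt_trans (i_lt_i' hi2') h24) h45))
          tauto
      exact absurd (hcl i2 i2' hi2' hd) (not_le.mpr (two_lt_ncard y hi2' hAlt))
    · rintro ⟨i1, i2, i2', i4, i5, h12, hi2', h24, h45, c1, c2, c3, c4⟩
      have hd : y i2' < y i2 := lt_trans c1 (lt_trans c2 (lt_trans c3 c4))
      have hAlt : AltTriple y i2 i2' := by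
        refine ⟨y i5, y i1, y i4, c1, c2, c3, c4, ?_, ?_⟩ <;>
          simp only [Equiv.symm_apply_apply]
        · have h5 : ¬ i5 < i2 :=
            not_lt.mpr (le_of_lt (lt_trans (lt_trans (i_lt_i' hi2') h24) h45))
          tauto
        · have h4 : ¬ i4 < i2 := not_lt.mpr (le_of_lt (lt_trans (i_lt_i' hi2') h24))
          have h5 : ¬ i5 < i2 :=
            not_lt.mpr (le_of_lt (lt_trans (lt_trans (i_lt_i' hi2') h24) h45))
          tauto
      exact absurd (hcl i2 i2' hi2' hd) (not_le.mpr (two_lt_ncard y hi2' hAlt))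
  · intro hav i i' hi' hd
    refine ncard_le_two y hi' ?_
    rintro ⟨v1, v2, v3, hv1, h12, h23, hv3, hne, hiff⟩
    obtain ⟨hav1, hav2, hav3, hav4⟩ := hav
    have e1 : y (y.symm v1) = v1 := y.apply_symm_apply v1
    have e2 : y (y.symm v2) = v2 := y.apply_symm_apply v2
    have e3 : y (y.symm v3) = v3 := y.apply_symm_apply v3
    have hb1' : v1 < y i := lt_trans h12 (lt_trans h23 hv3)
    have hb2 : y i' < v2 := lt_trans hv1 h12
    have hb2' : v2 < y i := lt_trans h23 hv3
    have hb3 : y i' < v3 := lt_trans hb2 h23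
    have hp13 : y.symm v1 ≠ y.symm v3 := by
      intro h
      exact absurd (e1 ▸ e3 ▸ congrArg y h) (ne_of_lt (lt_trans h12 h23))
    by_cases hB : y.symm v1 < i
    · -- v1, v3 before; v2 after
      have hB3 : y.symm v3 < i := hiff.mp hB
      have hB2 : ¬ y.symm v2 < i := fun h => hne ⟨fun _ => h, fun _ => hB⟩
      have hA2 : i' < y.symm v2 := pos_split y hi' hb2 hb2' hB2
      rcases hp13.lt_or_gt with h | h
      · exact hav1 ⟨y.symm v1, y.symm v3, i, i', y.symm v2, h, hB3, hi', hA2,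
          by rw [e1]; exact hv1, by rw [e1, e2]; exact h12,
          by rw [e2, e3]; exact h23, by rw [e3]; exact hv3⟩
      · exact hav2 ⟨y.symm v3, y.symm v1, i, i', y.symm v2, h, hB, hi', hA2,
          by rw [e1]; exact hv1, by rw [e1, e2]; exact h12,
          by rw [e2, e3]; exact h23, by rw [e3]; exact hv3⟩
    · -- v1, v3 after; v2 before
      have hB3 : ¬ y.symm v3 < i := fun h => hB (hiff.mpr h)
      have hB2 : y.symm v2 < i := by tauto
      have hA1 : i' < y.symm v1 := pos_split y hi' hv1 hb1' hB
      have hA3 : i' < y.symm v3 := pos_split y hi' hb3 hv3 hB3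
      rcases hp13.lt_or_gt with h | h
      · exact hav3 ⟨y.symm v2, i, i', y.symm v1, y.symm v3, hB2, hi', hA1, h,
          by rw [e1]; exact hv1, by rw [e1, e2]; exact h12,
          by rw [e2, e3]; exact h23, by rw [e3]; exact hv3⟩
      · exact hav4 ⟨y.symm v2, i, i', y.symm v3, y.symm v1, hB2, hi', hA3, h,
          by rw [e1]; exact hv1, by rw [e1, e2]; exact h12,
          by rw [e2, e3]; exact h23, by rw [e3]; exact hv3⟩
end
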